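/- Let Ψ = (G, ψ) be a connected signed graph. Then the largest eigenvalue of A(Ψ) equals the largest eigenvalue of A(G) if and only if Ψ is balanced. (Stanić's spectral criterion.) -/

import Mathlib

open Matrix
open scoped Classical ComplexOrder

noncomputable section

namespace GG

variable {V : Type*}

/-- The gain of a walk: product of the gains of its oriented edges. -/
def walkGain {G : SimpleGraph V} (φ : V → V → ℂ) {u v : V} (p : G.Walk u v) : ℂ :=
  (p.darts.map (fun d => φ d.toProd.1 d.toProd.2)).prod

/-- `φ` is a `𝕋`-gain function on `G`: unit modulus on edges, inverse under reversal. -/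
def IsGain (G : SimpleGraph V) (φ : V → V → ℂ) : Prop :=
  (∀ i j, G.Adj i j → ‖φ i j‖ = 1) ∧ (∀ i j, G.Adj i j → φ j i = (φ i j)⁻¹)

/-- Adjacency matrix of a gain graph. -/
def gainAdj [Fintype V] [DecidableEq V] (G : SimpleGraph V) (φ : V → V → ℂ) :
    Matrix V V ℂ := fun i j => if G.Adj i j then φ i j else 0

/-- A gain graph is balanced if every cycle has gain 1. -/
def GBalanced (G : SimpleGraph V) (φ : V → V → ℂ) : Prop :=
  ∀ (u : V) (c : G.Walk u u), c.IsCycle → walkGain φ c = 1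

/-- All shortest paths between any pair of vertices have the same gain. -/
def DistCompatible (G : SimpleGraph V) (φ : V → V → ℂ) : Prop :=
  ∀ (s t : V) (p q : G.Walk s t), p.length = G.dist s t → q.length = G.dist s t →
    walkGain φ p = walkGain φ q

/-- The set of gains of shortest `s`-`t` paths. -/
def shortestGains (G : SimpleGraph V) (φ : V → V → ℂ) (s t : V) : Set ℂ :=
  {z | ∃ p : G.Walk s t, p.length = G.dist s t ∧ walkGain φ p = z}

/-- The element of `S` maximizing the real part, ties broken by maximal imaginary part
(correct for finite nonempty sets of gains). -/
def lexMaxGain (S : Set ℂ) : ℂ :=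
  ⟨sSup (Complex.re '' S), sSup (Complex.im '' {z ∈ S | z.re = sSup (Complex.re '' S)})⟩

/-- The element of `S` minimizing the real part, ties broken by minimal imaginary part. -/
def lexMinGain (S : Set ℂ) : ℂ :=
  ⟨sInf (Complex.re '' S), sInf (Complex.im '' {z ∈ S | z.re = sInf (Complex.re '' S)})⟩

/-- The maximum gain distance matrix `D^max_<(Φ)` with respect to a strict order `lt`. -/
def Dmax [Fintype V] [DecidableEq V] (G : SimpleGraph V) (φ : V → V → ℂ)
    (lt : V → V → Prop) : Matrix V V ℂ := fun s t =>
  if lt s t then lexMaxGain (shortestGains G φ s t) * (G.dist s t : ℂ)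
  else if lt t s then (starRingEnd ℂ) (lexMaxGain (shortestGains G φ t s)) * (G.dist s t : ℂ)
  else 0

/-- The minimum gain distance matrix `D^min_<(Φ)` with respect to a strict order `lt`. -/
def Dmin [Fintype V] [DecidableEq V] (G : SimpleGraph V) (φ : V → V → ℂ)
    (lt : V → V → Prop) : Matrix V V ℂ := fun s t =>
  if lt s t then lexMinGain (shortestGains G φ s t) * (G.dist s t : ℂ)
  else if lt t s then (starRingEnd ℂ) (lexMinGain (shortestGains G φ t s)) * (G.dist s t : ℂ)
  else 0

/-- Vertex order independence: the gain distance matrices agree for the standard order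
and its reverse. -/
def OrderIndependent [Fintype V] [DecidableEq V] [LinearOrder V] (G : SimpleGraph V)
    (φ : V → V → ℂ) : Prop :=
  Dmax G φ (· < ·) = Dmax G φ (fun a b => b < a) ∧
  Dmin G φ (· < ·) = Dmin G φ (fun a b => b < a)

/-- The largest (real) eigenvalue of a matrix. -/
def maxEig [Fintype V] [DecidableEq V] (A : Matrix V V ℂ) : ℝ :=
  sSup {r : ℝ | (r : ℂ) ∈ spectrum ℂ A}

/-- The spectral radius of a matrix. -/
def specRad [Fintype V] [DecidableEq V] (A : Matrix V V ℂ) : ℝ :=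
  sSup {r : ℝ | ∃ z ∈ spectrum ℂ A, ‖z‖ = r}

/-- The distance matrix of the underlying graph, as a complex matrix. -/
def distMatrix [Fintype V] [DecidableEq V] (G : SimpleGraph V) : Matrix V V ℂ :=
  fun i j => (G.dist i j : ℂ)

/-- Weighted gain adjacency matrix `A(Φ_w)`. -/
def wGainAdj [Fintype V] [DecidableEq V] (G : SimpleGraph V) (φ : V → V → ℂ)
    (w : V → V → ℝ) : Matrix V V ℂ := fun i j => if G.Adj i j then φ i j * (w i j : ℂ) else 0

/-- Weighted adjacency matrix `A(G_w)` of the underlying weighted graph. -/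
def wAdj [Fintype V] [DecidableEq V] (G : SimpleGraph V) (w : V → V → ℝ) :
    Matrix V V ℂ := fun i j => if G.Adj i j then (w i j : ℂ) else 0


section MatrixLemmas
variable [Fintype V] [DecidableEq V]
lemma spectrum_eq_range {A : Matrix V V ℂ} (hA : A.IsHermitian) :
    spectrum ℂ A = Set.range (fun i => (hA.eigenvalues i : ℂ)) := by
  conv_lhs => rw [hA.spectral_theorem, Unitary.conjStarAlgAut_apply]
  have hu : ((hA.eigenvectorUnitary : Matrix V V ℂ)) * (star (hA.eigenvectorUnitary : Matrix V V ℂ)) = 1 :=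
    Unitary.mul_star_self_of_mem hA.eigenvectorUnitary.2
  have hu' : (star (hA.eigenvectorUnitary : Matrix V V ℂ)) * ((hA.eigenvectorUnitary : Matrix V V ℂ)) = 1 :=
    Unitary.star_mul_self_of_mem hA.eigenvectorUnitary.2
  let u : (Matrix V V ℂ)ˣ := ⟨_, _, hu, hu'⟩
  have : spectrum ℂ ((u : Matrix V V ℂ) * (diagonal (RCLike.ofReal ∘ hA.eigenvalues)) * (↑u⁻¹ : Matrix V V ℂ))
      = spectrum ℂ (diagonal (RCLike.ofReal ∘ hA.eigenvalues)) := spectrum.units_conjugate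
  rw [show (↑u⁻¹ : Matrix V V ℂ) = star (hA.eigenvectorUnitary : Matrix V V ℂ) from rfl] at this
  rw [this, spectrum_diagonal]
  ext z; simp [Set.range_comp]

lemma real_spectrum_eq {A : Matrix V V ℂ} (hA : A.IsHermitian) :
    {r : ℝ | (r : ℂ) ∈ spectrum ℂ A} = Set.range hA.eigenvalues := by
  ext r
  simp only [Set.mem_setOf_eq, spectrum_eq_range hA, Set.mem_range]
  constructor
  · rintro ⟨i, hi⟩; exact ⟨i, by exact_mod_cast hi⟩
  · rintro ⟨i, hi⟩; exact ⟨i, by exact_mod_cast hi⟩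

lemma maxEig_eq_sSup_range [Nonempty V] {A : Matrix V V ℂ} (hA : A.IsHermitian) :
    maxEig A = sSup (Set.range hA.eigenvalues) := by
  rw [maxEig, real_spectrum_eq hA]

lemma exists_eigenvalues_eq_maxEig [Nonempty V] {A : Matrix V V ℂ} (hA : A.IsHermitian) :
    ∃ i, hA.eigenvalues i = maxEig A := by
  rw [maxEig_eq_sSup_range hA]
  exact (Set.range_nonempty hA.eigenvalues).csSup_mem (Set.finite_range _)

lemma eigenvalues_le_maxEig [Nonempty V] {A : Matrix V V ℂ} (hA : A.IsHermitian) (i : V) :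
    hA.eigenvalues i ≤ maxEig A := by
  rw [maxEig_eq_sSup_range hA]
  exact le_csSup (Set.finite_range _).bddAbove ⟨i, rfl⟩

lemma maxEig_mem_spectrum [Nonempty V] {A : Matrix V V ℂ} (hA : A.IsHermitian) :
    ((maxEig A : ℝ) : ℂ) ∈ spectrum ℂ A := by
  obtain ⟨i, hi⟩ := exists_eigenvalues_eq_maxEig hA
  rw [spectrum_eq_range hA]
  exact ⟨i, by simp [hi]⟩

lemma posSemidef_maxEig_smul_sub [Nonempty V] {A : Matrix V V ℂ} (hA : A.IsHermitian) :
    (((maxEig A : ℝ) : ℂ) • (1 : Matrix V V ℂ) - A).PosSemidef := by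
  set c := maxEig A with hc
  have hu : ((hA.eigenvectorUnitary : Matrix V V ℂ)) * (star (hA.eigenvectorUnitary : Matrix V V ℂ)) = 1 :=
    Unitary.mul_star_self_of_mem hA.eigenvectorUnitary.2
  have hsm : (c : ℂ) • (1 : Matrix V V ℂ)
      = (hA.eigenvectorUnitary : Matrix V V ℂ) * ((c : ℂ) • (1 : Matrix V V ℂ)) *
        (star (hA.eigenvectorUnitary : Matrix V V ℂ)) := by
    rw [Matrix.mul_smul, Matrix.smul_mul, mul_one, hu]
  have h1 : ((c : ℂ) • (1 : Matrix V V ℂ) - A)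
      = (hA.eigenvectorUnitary : Matrix V V ℂ) *
        diagonal (fun i => ((c - hA.eigenvalues i : ℝ) : ℂ)) *
        (star (hA.eigenvectorUnitary : Matrix V V ℂ)) := by
    conv_lhs => rw [hA.spectral_theorem, Unitary.conjStarAlgAut_apply, hsm]
    rw [← Matrix.sub_mul, ← Matrix.mul_sub]
    congr 2
    rw [← Matrix.diagonal_one, ← Matrix.diagonal_smul, Matrix.diagonal_sub]
    congr 1
    funext i
    push_cast
    simp [Pi.smul_apply]
  rw [h1, show (star (hA.eigenvectorUnitary : Matrix V V ℂ)) = (hA.eigenvectorUnitary : Matrix V V ℂ)ᴴ from rfl]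
  refine (Matrix.posSemidef_diagonal_iff.mpr ?_).mul_mul_conjTranspose_same _
  intro i
  rw [show ((0:ℂ) = ((0:ℝ):ℂ)) from rfl, Complex.real_le_real]
  have := eigenvalues_le_maxEig hA i
  linarith

lemma star_dotProduct_self (x : V → ℂ) :
    star x ⬝ᵥ x = ((∑ i, Complex.normSq (x i) : ℝ) : ℂ) := by
  simp only [dotProduct, Pi.star_apply, Complex.star_def]
  push_cast
  refine Finset.sum_congr rfl fun i _ => ?_
  rw [← Complex.normSq_eq_conj_mul_self]

lemma rayleigh_le [Nonempty V] {A : Matrix V V ℂ} (hA : A.IsHermitian) (x : V → ℂ) :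
    (star x ⬝ᵥ A *ᵥ x).re ≤ maxEig A * ∑ i, Complex.normSq (x i) := by
  have hp := (posSemidef_iff_dotProduct_mulVec.mp (posSemidef_maxEig_smul_sub hA)).2 x
  rw [Matrix.sub_mulVec, Matrix.smul_mulVec, Matrix.one_mulVec, dotProduct_sub,
    dotProduct_smul, star_dotProduct_self] at hp
  rw [Complex.le_def] at hp
  have h1 := hp.1
  simp only [Complex.zero_re, Complex.sub_re, Complex.smul_re] at h1
  have : (((maxEig A : ℝ) : ℂ) * ((∑ i, Complex.normSq (x i) : ℝ) : ℂ)).re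
      = maxEig A * ∑ i, Complex.normSq (x i) := by
    rw [← Complex.ofReal_mul, Complex.ofReal_re]
  rw [smul_eq_mul] at h1
  rw [this] at h1
  linarith

lemma quad_eq_zero_imp [Nonempty V] {A : Matrix V V ℂ} (hA : A.IsHermitian) (x : V → ℂ)
    (h : star x ⬝ᵥ ((((maxEig A : ℝ) : ℂ) • (1 : Matrix V V ℂ) - A) *ᵥ x) = 0) :
    A *ᵥ x = ((maxEig A : ℝ) : ℂ) • x := by
  have := ((posSemidef_maxEig_smul_sub hA).dotProduct_mulVec_zero_iff x).mp h
  rw [Matrix.sub_mulVec, Matrix.smul_mulVec, Matrix.one_mulVec, sub_eq_zero] at this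
  exact this.symm

lemma exists_eigenvector_of_mem_spectrum {A : Matrix V V ℂ} {μ : ℂ} (h : μ ∈ spectrum ℂ A) :
    ∃ x, x ≠ 0 ∧ A *ᵥ x = μ • x := by
  have h' : ¬ IsUnit (algebraMap ℂ (Matrix V V ℂ) μ - A) := spectrum.mem_iff.mp h
  have hdet : (algebraMap ℂ (Matrix V V ℂ) μ - A).det = 0 := by
    by_contra hd
    exact h' ((Matrix.isUnit_iff_isUnit_det _).mpr (isUnit_iff_ne_zero.mpr hd))
  obtain ⟨v, hv0, hv⟩ := (Matrix.exists_mulVec_eq_zero_iff).mpr hdet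
  refine ⟨v, hv0, ?_⟩
  have halg : algebraMap ℂ (Matrix V V ℂ) μ = μ • (1 : Matrix V V ℂ) := by
    rw [Algebra.algebraMap_eq_smul_one]
  rw [halg, Matrix.sub_mulVec, Matrix.smul_mulVec, Matrix.one_mulVec, sub_eq_zero] at hv
  exact hv.symm

end MatrixLemmas

section WalkLemmas
variable {G : SimpleGraph V}

lemma walkGain_nil (φ : V → V → ℂ) {a : V} : walkGain φ (SimpleGraph.Walk.nil : G.Walk a a) = 1 := by
  simp [walkGain]

lemma walkGain_cons (φ : V → V → ℂ) {a b c : V} (h : G.Adj a b) (p : G.Walk b c) :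
    walkGain φ (SimpleGraph.Walk.cons h p) = φ a b * walkGain φ p := by
  simp [walkGain]

lemma walkGain_append (φ : V → V → ℂ) {a b c : V} (p : G.Walk a b) (q : G.Walk b c) :
    walkGain φ (p.append q) = walkGain φ p * walkGain φ q := by
  simp [walkGain, SimpleGraph.Walk.darts_append]

lemma walkGain_reverse (φ : V → V → ℂ) (hsymm : ∀ i j, φ i j = φ j i) {a b : V} (p : G.Walk a b) :
    walkGain φ p.reverse = walkGain φ p := by
  rw [walkGain, SimpleGraph.Walk.darts_reverse, List.map_reverse, List.prod_reverse, List.map_map]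
  rw [walkGain]
  congr 1
  refine List.map_congr_left fun d _ => ?_
  simp [SimpleGraph.Dart.symm, hsymm d.toProd.1 d.toProd.2]

lemma walkGain_rotate (φ : V → V → ℂ) {u w : V} (c : G.Walk u u) (h : w ∈ c.support) :
    walkGain φ (c.rotate w h) = walkGain φ c :=
  List.Perm.prod_eq (((SimpleGraph.Walk.rotate_darts c w h).perm).map _)

lemma walkGain_length_one (φ : V → V → ℂ) {a b : V} (q : G.Walk a b) (h : q.length = 1) :
    walkGain φ q = φ a b := by
  cases q with
  | nil => simp at h
  | cons hadj q' =>
    cases q' with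
    | nil => simp [walkGain]
    | cons h2 q'' => simp [SimpleGraph.Walk.length_cons] at h

lemma walkGain_telescope {φ : V → V → ℂ} (θ : V → ℂ)
    (hθ : ∀ v, θ v * (starRingEnd ℂ) (θ v) = 1)
    (hφ : ∀ i j, G.Adj i j → φ i j = θ i * (starRingEnd ℂ) (θ j))
    {a b : V} (p : G.Walk a b) : walkGain φ p = θ a * (starRingEnd ℂ) (θ b) := by
  induction p with
  | nil => rw [walkGain_nil, hθ]
  | @cons a c b h q ih =>
    rw [walkGain_cons, hφ _ _ h, ih]
    linear_combination (θ a * (starRingEnd ℂ) (θ b)) * hθ c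

lemma dart_fst_ne_end {a b : V} (q : G.Walk a b) (hq : q.IsPath) {d : G.Dart}
    (hd : d ∈ q.darts) : d.toProd.1 ≠ b := by
  induction q with
  | nil => simp at hd
  | @cons a c b h q' ih =>
    rw [SimpleGraph.Walk.cons_isPath_iff] at hq
    rw [SimpleGraph.Walk.darts_cons, List.mem_cons] at hd
    rcases hd with rfl | hd
    · intro hab
      exact hq.2 (hab ▸ q'.end_mem_support)
    · exact ih hq.1 hd

lemma dart_start_end_length_one {a b : V} (q : G.Walk a b) (hq : q.IsPath) {d : G.Dart}
    (hd : d ∈ q.darts) (h1 : d.toProd.1 = a) (h2 : d.toProd.2 = b) : q.length = 1 := by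
  induction q with
  | nil => simp at hd
  | @cons a c b h q' ih =>
    rw [SimpleGraph.Walk.cons_isPath_iff] at hq
    rw [SimpleGraph.Walk.darts_cons, List.mem_cons] at hd
    rcases hd with rfl | hd
    · simp only at h2
      subst h2
      rw [SimpleGraph.Walk.isPath_iff_eq_nil] at *
      rw [hq.1]
      simp
    · exfalso
      apply hq.2
      rw [← h1]
      exact SimpleGraph.Walk.dart_fst_mem_support_of_mem_darts _ hd

lemma path_edge_length_one {v u : V} (q : G.Walk v u) (hq : q.IsPath)
    (he : s(u, v) ∈ q.edges) : q.length = 1 := by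
  rw [SimpleGraph.Walk.edges, List.mem_map] at he
  obtain ⟨d, hd, hde⟩ := he
  have : d.toProd.1 = u ∧ d.toProd.2 = v ∨ d.toProd.1 = v ∧ d.toProd.2 = u := by
    have := hde
    rw [SimpleGraph.Dart.edge] at this
    rw [Sym2.eq_iff] at this
    tauto
  rcases this with ⟨h1, h2⟩ | ⟨h1, h2⟩
  · exact absurd h1 (dart_fst_ne_end q hq hd)
  · exact dart_start_end_length_one q hq hd h1 h2

lemma closedWalk_gain_one {σ : V → V → ℝ}
    (hsgn : ∀ i j, G.Adj i j → σ i j = 1 ∨ σ i j = -1)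
    (hsymm : ∀ i j, σ i j = σ j i)
    (hbal : GBalanced G (fun i j => ((σ i j : ℝ) : ℂ))) :
    ∀ (n : ℕ) {u : V} (c : G.Walk u u), c.length = n →
      walkGain (fun i j => ((σ i j : ℝ) : ℂ)) c = 1 := by
  intro n
  induction n using Nat.strong_induction_on with
  | _ n ih =>
    intro u c hlen
    set φ : V → V → ℂ := fun i j => ((σ i j : ℝ) : ℂ) with hφ
    by_cases hdup : c.support.tail.Nodup
    · -- no interior duplicates
      cases c with
      | nil => simp [walkGain]
      | @cons u v _ hadj q =>
        have hqpath : q.IsPath := by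
          rw [SimpleGraph.Walk.isPath_def]
          simpa using hdup
        by_cases he : s(u, v) ∈ q.edges
        · have hq1 : q.length = 1 := path_edge_length_one q hqpath he
          rw [walkGain_cons, walkGain_length_one _ _ hq1]
          have h2 : σ v u = σ u v := hsymm v u
          rcases hsgn u v hadj with h | h <;>
            · rw [hφ]; push_cast [h2, h]; norm_num
        · have hcyc : (SimpleGraph.Walk.cons hadj q).IsCycle :=
            (SimpleGraph.Walk.cons_isCycle_iff q hadj).mpr ⟨hqpath, he⟩
          exact hbal u _ hcyc
    · -- duplicate vertex w in interior
      obtain ⟨w, hwdup⟩ := List.exists_duplicate_iff_not_nodup.mpr hdup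
      have hwcount : 2 ≤ c.support.tail.count w := List.duplicate_iff_two_le_count.mp hwdup
      have hwmem : w ∈ c.support := by
        rw [SimpleGraph.Walk.support_eq_cons]
        exact List.mem_cons_of_mem _ hwdup.mem
      set c' := c.rotate w hwmem with hc'
      have hgain : walkGain φ c' = walkGain φ c := walkGain_rotate φ c hwmem
      have hlen' : c'.length = n := by
        have hd := (SimpleGraph.Walk.rotate_darts c w hwmem).perm.length_eq
        rw [SimpleGraph.Walk.length_darts, SimpleGraph.Walk.length_darts] at hd
        rw [hc'] at *
        omega
      have hcount' : 2 ≤ c'.support.tail.count w :=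
        le_of_le_of_eq hwcount ((SimpleGraph.Walk.support_rotate c w hwmem).perm.count_eq w).symm
      have htail_len : c'.support.tail.length = c'.length := by
        have := SimpleGraph.Walk.length_support c'
        rw [List.length_tail, this]
        omega
      have hnotnil : ¬ c'.Nil := by
        intro hnil
        rw [SimpleGraph.Walk.nil_iff_length_eq] at hnil
        have h0 : c'.support.tail = [] := List.length_eq_zero_iff.mp (by omega)
        rw [h0] at hcount'
        simp at hcount'
      obtain ⟨z, hadj, q, hq⟩ := SimpleGraph.Walk.not_nil_iff.mp hnotnil
      have hqcount : 2 ≤ q.support.count w := by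
        have : c'.support.tail = q.support := by
          rw [hq, SimpleGraph.Walk.support_cons, List.tail_cons]
        rwa [this] at hcount'
      have hwq : w ∈ q.support := List.count_pos_iff.mp (by omega)
      set t := q.takeUntil w hwq with ht
      set r := q.dropUntil w hwq with hr
      have hspec : t.append r = q := SimpleGraph.Walk.take_spec q hwq
      have hcount_t : t.support.count w = 1 :=
        SimpleGraph.Walk.count_support_takeUntil_eq_one q hwq
      have hsupp : q.support = t.support ++ r.support.tail := by
        rw [← hspec, SimpleGraph.Walk.support_append]
      have hcount_r : 1 ≤ r.support.tail.count w := by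
        rw [hsupp, List.count_append, hcount_t] at hqcount
        omega
      have hrnotnil : r.length ≠ 0 := by
        intro h0
        have htl : r.support.tail.length = r.length := by
          rw [List.length_tail, SimpleGraph.Walk.length_support]
          omega
        have : r.support.tail = [] := List.length_eq_zero_iff.mp (by omega)
        rw [this] at hcount_r
        simp at hcount_r
      have hlenq : t.length + r.length = q.length := by
        rw [← hspec, SimpleGraph.Walk.length_append]
      have hlenc' : c'.length = q.length + 1 := by
        rw [hq, SimpleGraph.Walk.length_cons]
      have h1 : walkGain φ (SimpleGraph.Walk.cons hadj t) = 1 := by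
        refine ih (t.length + 1) (by omega) _ ?_
        rw [SimpleGraph.Walk.length_cons]
      have h2 : walkGain φ r = 1 := by
        refine ih r.length (by omega) _ rfl
      rw [← hgain, hq, walkGain_cons, ← hspec, walkGain_append]
      rw [walkGain_cons] at h1
      calc φ w z * (walkGain φ t * walkGain φ r)
          = (φ w z * walkGain φ t) * walkGain φ r := by ring
        _ = 1 := by rw [h1, h2, one_mul]

end WalkLemmas


section Main
variable [Fintype V] [DecidableEq V]

lemma isHermitian_gainAdj (G : SimpleGraph V) (σ : V → V → ℝ)
    (hsymm : ∀ i j, σ i j = σ j i) :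
    (gainAdj G (fun i j => ((σ i j : ℝ) : ℂ))).IsHermitian := by
  unfold Matrix.IsHermitian
  ext i j
  rw [Matrix.conjTranspose_apply]
  simp only [gainAdj, G.adj_comm j i]
  split_ifs with h
  · rw [Complex.star_def, Complex.conj_ofReal, hsymm j i]
  · simp

lemma isHermitian_adjMatrixC (G : SimpleGraph V) : (G.adjMatrix ℂ).IsHermitian := by
  unfold Matrix.IsHermitian
  ext i j
  rw [Matrix.conjTranspose_apply]
  simp [SimpleGraph.adjMatrix_apply, G.adj_comm j i, apply_ite star]

lemma walkGain_pm {G : SimpleGraph V} {σ : V → V → ℝ}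
    (hsgn : ∀ i j, G.Adj i j → σ i j = 1 ∨ σ i j = -1) {a b : V} (p : G.Walk a b) :
    walkGain (fun i j => ((σ i j : ℝ) : ℂ)) p = 1 ∨
      walkGain (fun i j => ((σ i j : ℝ) : ℂ)) p = -1 := by
  induction p with
  | nil => left; exact walkGain_nil _
  | cons h q ih =>
    rw [walkGain_cons]
    rcases hsgn _ _ h with h' | h' <;> rcases ih with h'' | h'' <;>
      rw [h', h''] <;> norm_num

lemma balanced_imp_maxEig_eq [Nonempty V] (G : SimpleGraph V) (hconn : G.Connected)
    (σ : V → V → ℝ) (hsgn : ∀ i j, G.Adj i j → σ i j = 1 ∨ σ i j = -1)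
    (hsymm : ∀ i j, σ i j = σ j i)
    (hbal : GBalanced G (fun i j => ((σ i j : ℝ) : ℂ))) :
    maxEig (gainAdj G (fun i j => ((σ i j : ℝ) : ℂ))) = maxEig (G.adjMatrix ℂ) := by
  set φ : V → V → ℂ := fun i j => ((σ i j : ℝ) : ℂ) with hφ
  have hφsymm : ∀ i j, φ i j = φ j i := fun i j => by rw [hφ]; push_cast [hsymm i j]; rfl
  have hcw := closedWalk_gain_one hsgn hsymm hbal
  let u₀ : V := Classical.arbitrary V
  let pth : ∀ v : V, G.Walk u₀ v := fun v => (hconn.preconnected u₀ v).some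
  set Θ : V → ℂ := fun v => walkGain φ (pth v) with hΘ
  have hΘpm : ∀ v, Θ v = 1 ∨ Θ v = -1 := fun v => walkGain_pm hsgn _
  have hθsq : ∀ v, Θ v * Θ v = 1 := fun v => by rcases hΘpm v with h | h <;> rw [h] <;> norm_num
  have hedge : ∀ i j, G.Adj i j → φ i j = Θ i * Θ j := by
    intro i j h
    have hW : walkGain φ ((pth i).append (SimpleGraph.Walk.cons h (pth j).reverse)) = 1 :=
      hcw _ _ rfl
    rw [walkGain_append, walkGain_cons, walkGain_reverse φ hφsymm] at hW
    have hW' : Θ i * (φ i j * Θ j) = 1 := hW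
    rcases hΘpm i with hi | hi <;> rcases hΘpm j with hj | hj <;>
      rw [hi, hj] at hW' ⊢ <;>
      first
        | linear_combination hW'
        | linear_combination -hW' 
  set D : Matrix V V ℂ := Matrix.diagonal Θ with hD
  have hDD : D * D = 1 := by
    have hfun : (fun i => Θ i * Θ i) = fun _ => (1 : ℂ) := funext hθsq
    rw [hD, Matrix.diagonal_mul_diagonal, hfun, Matrix.diagonal_one]
  have hconj : gainAdj G φ = D * (G.adjMatrix ℂ) * D := by
    ext i j
    rw [Matrix.mul_diagonal, Matrix.diagonal_mul]
    simp only [gainAdj, SimpleGraph.adjMatrix_apply]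
    split_ifs with h
    · rw [hedge i j h]; ring
    · ring
  let u : (Matrix V V ℂ)ˣ := ⟨D, D, hDD, hDD⟩
  have hspec : spectrum ℂ (gainAdj G φ) = spectrum ℂ (G.adjMatrix ℂ) := by
    rw [hconj]
    exact spectrum.units_conjugate (u := u)
  rw [maxEig, maxEig, hspec]

lemma eq_ofReal_of_re_eq_abs {z : ℂ} (h : z.re = ‖z‖) :
    z = ((‖z‖ : ℝ) : ℂ) := by
  have hsq : ‖z‖ ^ 2 = z.re * z.re + z.im * z.im := by
    rw [Complex.sq_norm, Complex.normSq_apply]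
  have h3 : ‖z‖ ^ 2 = z.re * z.re := by rw [← h]; ring
  have him : z.im * z.im = 0 := by linarith [h3 ▸ hsq]
  have him0 : z.im = 0 := mul_self_eq_zero.mp him
  apply Complex.ext
  · rw [Complex.ofReal_re, h]
  · rw [Complex.ofReal_im, him0]

lemma maxEig_eq_imp_balanced [Nonempty V] (G : SimpleGraph V) (hconn : G.Connected)
    (σ : V → V → ℝ) (hsgn : ∀ i j, G.Adj i j → σ i j = 1 ∨ σ i j = -1)
    (hsymm : ∀ i j, σ i j = σ j i)
    (hEq : maxEig (gainAdj G (fun i j => ((σ i j : ℝ) : ℂ))) = maxEig (G.adjMatrix ℂ)) :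
    GBalanced G (fun i j => ((σ i j : ℝ) : ℂ)) := by
  set φ : V → V → ℂ := fun i j => ((σ i j : ℝ) : ℂ) with hφ
  set AΨ : Matrix V V ℂ := gainAdj G φ with hAΨ
  set AG : Matrix V V ℂ := G.adjMatrix ℂ with hAG
  have hermΨ : AΨ.IsHermitian := isHermitian_gainAdj G σ hsymm
  have hermG : AG.IsHermitian := isHermitian_adjMatrixC G
  have habsφ : ∀ i j, G.Adj i j → ‖φ i j‖ = 1 := by
    intro i j h
    rcases hsgn i j h with h' | h' <;> simp [hφ, h']
  set lam : ℝ := maxEig AG with hlam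
  obtain ⟨x, hx0, hxeig⟩ := exists_eigenvector_of_mem_spectrum (maxEig_mem_spectrum hermΨ)
  rw [hEq] at hxeig
  set y : V → ℝ := fun i => ‖x i‖ with hy
  set yC : V → ℂ := fun i => ((y i : ℝ) : ℂ) with hyCdef
  set N : ℝ := ∑ i, Complex.normSq (x i) with hN
  have hyNN : ∑ i, Complex.normSq (yC i) = N := by
    rw [hN]
    refine Finset.sum_congr rfl fun i _ => ?_
    rw [hyCdef]
    rw [Complex.normSq_ofReal, hy]
    rw [Complex.normSq_eq_norm_sq, sq]
  have hexpand : ∀ (M : Matrix V V ℂ) (v w : V → ℂ),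
      star v ⬝ᵥ M *ᵥ w = ∑ i, ∑ j, (starRingEnd ℂ) (v i) * M i j * w j := by
    intro M v w
    simp only [dotProduct, Matrix.mulVec, Pi.star_apply, Complex.star_def, Finset.mul_sum]
    exact Finset.sum_congr rfl fun i _ => Finset.sum_congr rfl fun j _ => by ring
  set Q : ℝ := ∑ i, ∑ j, (if G.Adj i j then (1:ℝ) else 0) * (y i * y j) with hQ
  have hQC : star yC ⬝ᵥ AG *ᵥ yC = ((Q : ℝ) : ℂ) := by
    rw [hexpand, hQ]
    push_cast
    refine Finset.sum_congr rfl fun i _ => Finset.sum_congr rfl fun j _ => ?_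
    rw [hAG]
    simp only [SimpleGraph.adjMatrix_apply, hyCdef, Complex.conj_ofReal]
    split_ifs <;> simp [Complex.conj_ofReal] <;> push_cast <;> ring
  have hAij_adj : ∀ i j, G.Adj i j → AΨ i j = φ i j := by
    intro i j h; rw [hAΨ]; simp [gainAdj, h]
  have hAij_nadj : ∀ i j, ¬ G.Adj i j → AΨ i j = 0 := by
    intro i j h; rw [hAΨ]; simp [gainAdj, h]
  have habsAΨ : ∀ i j, G.Adj i j →
      ‖(starRingEnd ℂ) (x i) * AΨ i j * x j‖ = y i * y j := by
    intro i j h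
    rw [hAij_adj i j h]
    simp only [norm_mul, Complex.norm_conj, habsφ i j h, hy]
    ring
  have hterm : ∀ i j, ((starRingEnd ℂ) (x i) * AΨ i j * x j).re
      ≤ (if G.Adj i j then (1:ℝ) else 0) * (y i * y j) := by
    intro i j
    by_cases h : G.Adj i j
    · rw [if_pos h, one_mul, ← habsAΨ i j h]
      exact Complex.re_le_norm _
    · rw [if_neg h, hAij_nadj i j h]
      simp
  have hxsum : star x ⬝ᵥ AΨ *ᵥ x = ((lam : ℝ) : ℂ) * ((N : ℝ) : ℂ) := by
    rw [hxeig, dotProduct_smul, star_dotProduct_self, smul_eq_mul, hN]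
  have hresum : (star x ⬝ᵥ AΨ *ᵥ x).re = ∑ i, ∑ j, ((starRingEnd ℂ) (x i) * AΨ i j * x j).re := by
    rw [hexpand, Complex.re_sum]
    exact Finset.sum_congr rfl fun i _ => Complex.re_sum _ _
  have hlamN : (star x ⬝ᵥ AΨ *ᵥ x).re = lam * N := by
    rw [hxsum, ← Complex.ofReal_mul, Complex.ofReal_re]
  have hsum_le : lam * N ≤ Q := by
    rw [← hlamN, hresum, hQ]
    refine Finset.sum_le_sum fun i _ => Finset.sum_le_sum fun j _ => hterm i j
  have hQ_le : Q ≤ lam * N := by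
    have hr := rayleigh_le hermG yC
    rw [hQC] at hr
    rw [Complex.ofReal_re, hyNN, ← hlam] at hr
    exact hr
  have hQeq : Q = lam * N := le_antisymm hQ_le hsum_le
  have htermsum : ∑ i, ∑ j, ((starRingEnd ℂ) (x i) * AΨ i j * x j).re
      = ∑ i, ∑ j, (if G.Adj i j then (1:ℝ) else 0) * (y i * y j) := by
    rw [← hresum, ← hQ, hlamN, hQeq]
  have hpair : ∀ i j, ((starRingEnd ℂ) (x i) * AΨ i j * x j).re
      = (if G.Adj i j then (1:ℝ) else 0) * (y i * y j) := by
    intro i j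
    have hle : ∀ p ∈ Finset.univ ×ˢ Finset.univ,
        ((starRingEnd ℂ) (x p.1) * AΨ p.1 p.2 * x p.2).re
          ≤ (if G.Adj p.1 p.2 then (1:ℝ) else 0) * (y p.1 * y p.2) :=
      fun p _ => hterm p.1 p.2
    have hsums : ∑ p ∈ Finset.univ ×ˢ Finset.univ,
        ((starRingEnd ℂ) (x p.1) * AΨ p.1 p.2 * x p.2).re
        = ∑ p ∈ Finset.univ ×ˢ Finset.univ,
          (if G.Adj p.1 p.2 then (1:ℝ) else 0) * (y p.1 * y p.2) := by
      rw [Finset.sum_product, Finset.sum_product]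
      exact htermsum
    exact (Finset.sum_eq_sum_iff_of_le hle).mp hsums (i, j)
      (Finset.mem_product.mpr ⟨Finset.mem_univ i, Finset.mem_univ j⟩)
  have hyeig : AG *ᵥ yC = ((lam : ℝ) : ℂ) • yC := by
    apply quad_eq_zero_imp hermG
    rw [Matrix.sub_mulVec, Matrix.smul_mulVec, Matrix.one_mulVec, dotProduct_sub,
      dotProduct_smul, star_dotProduct_self, hyNN, hQC, smul_eq_mul, ← hlam]
    rw [hQeq]
    push_cast
    ring
  have hreal_eig : ∀ i, ∑ j, (if G.Adj i j then (1:ℝ) else 0) * y j = lam * y i := by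
    intro i
    have hci := congrFun hyeig i
    simp only [Matrix.mulVec, dotProduct, Pi.smul_apply, smul_eq_mul] at hci
    have hC : ((∑ j, (if G.Adj i j then (1:ℝ) else 0) * y j : ℝ) : ℂ)
        = ((lam * y i : ℝ) : ℂ) := by
      push_cast
      rw [← hci]
      refine Finset.sum_congr rfl fun j _ => ?_
      rw [hAG]
      simp only [SimpleGraph.adjMatrix_apply, hyCdef]
      split_ifs <;> push_cast <;> ring
    exact_mod_cast hC
  have hy_nonneg : ∀ i, 0 ≤ y i := fun i => norm_nonneg _
  have hprop : ∀ {i j : V} (p : G.Walk i j), y i = 0 → y j = 0 := by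
    intro i j p
    induction p with
    | nil => exact id
    | @cons a b c h q ih =>
      intro ha
      apply ih
      have h0 : ∑ j, (if G.Adj a j then (1:ℝ) else 0) * y j = 0 := by
        rw [hreal_eig a, ha, mul_zero]
      have hnn : ∀ j ∈ Finset.univ, 0 ≤ (if G.Adj a j then (1:ℝ) else 0) * y j := by
        intro j _
        refine mul_nonneg ?_ (hy_nonneg j)
        split_ifs <;> norm_num
      have := (Finset.sum_eq_zero_iff_of_nonneg hnn).mp h0 b (Finset.mem_univ b)
      rw [if_pos h, one_mul] at this
      exact this
  obtain ⟨i₀, hi₀⟩ := Function.ne_iff.mp hx0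
  have hypos : ∀ i, 0 < y i := by
    intro i
    rcases (hy_nonneg i).lt_or_eq with h | h
    · exact h
    · exfalso
      have h0 := hprop ((hconn.preconnected i i₀).some) h.symm
      simp only [hy] at h0
      simp only [norm_eq_zero] at h0
      exact hi₀ (by simpa using h0)
  have hedge_eq : ∀ i j, G.Adj i j →
      (starRingEnd ℂ) (x i) * φ i j * x j = ((y i * y j : ℝ) : ℂ) := by
    intro i j h
    have h1 := hpair i j
    rw [if_pos h, one_mul, hAij_adj i j h] at h1
    have habs : ‖(starRingEnd ℂ) (x i) * φ i j * x j‖ = y i * y j := by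
      have := habsAΨ i j h
      rwa [hAij_adj i j h] at this
    have := eq_ofReal_of_re_eq_abs (z := (starRingEnd ℂ) (x i) * φ i j * x j)
      (by rw [habs, h1])
    rwa [habs] at this
  set θ : V → ℂ := fun i => x i / ((y i : ℝ) : ℂ) with hθ
  have hyCne : ∀ i, ((y i : ℝ) : ℂ) ≠ 0 := by
    intro i
    exact_mod_cast (hypos i).ne'
  have hθunit : ∀ v, θ v * (starRingEnd ℂ) (θ v) = 1 := by
    intro v
    rw [Complex.mul_conj]
    have hns : Complex.normSq (θ v) = 1 := by
      rw [hθ]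
      simp only [map_div₀, Complex.normSq_ofReal]
      rw [Complex.normSq_eq_norm_sq]
      have hyv : ‖x v‖ = y v := by rw [hy]
      have hne := (hypos v).ne'
      rw [hyv]
      field_simp
    rw [hns]
    norm_num
  have hφθ : ∀ i j, G.Adj i j → φ i j = θ i * (starRingEnd ℂ) (θ j) := by
    intro i j h
    have he := hedge_eq i j h
    have hyi : ‖x i‖ = y i := by rw [hy]
    have hyj : ‖x j‖ = y j := by rw [hy]
    have hxi : x i * (starRingEnd ℂ) (x i) = (((y i * y i : ℝ)) : ℂ) := by
      rw [Complex.mul_conj]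
      norm_cast
      rw [← hyi, Complex.normSq_eq_norm_sq, sq]
    have hxj : x j * (starRingEnd ℂ) (x j) = (((y j * y j : ℝ)) : ℂ) := by
      rw [Complex.mul_conj]
      norm_cast
      rw [← hyj, Complex.normSq_eq_norm_sq, sq]
    have hrw : θ i * (starRingEnd ℂ) (θ j)
        = (x i * (starRingEnd ℂ) (x j)) / (((y i : ℝ) : ℂ) * ((y j : ℝ) : ℂ)) := by
      rw [hθ]
      simp only [map_div₀, Complex.conj_ofReal]
      rw [div_mul_div_comm]
    rw [hrw, eq_div_iff (mul_ne_zero (hyCne i) (hyCne j))]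
    push_cast at he hxi hxj ⊢
    apply mul_right_cancel₀ (mul_ne_zero (hyCne i) (hyCne j))
    linear_combination (x i * (starRingEnd ℂ) (x j)) * he
      - φ i j * (x j * (starRingEnd ℂ) (x j)) * hxi
      - φ i j * (((y i : ℝ) : ℂ) * ((y i : ℝ) : ℂ)) * hxj
  intro u c _
  rw [walkGain_telescope θ hθunit hφθ c, hθunit u]

end Main

/-- Stanić's spectral criterion: the largest eigenvalues of a connected signed
graph and its underlying graph coincide iff the signed graph is balanced. -/
theorem stanic_criterion {V : Type*} [Fintype V] [DecidableEq V]
    (G : SimpleGraph V) (hconn : G.Connected) (σ : V → V → ℝ)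
    (hsgn : ∀ i j, G.Adj i j → σ i j = 1 ∨ σ i j = -1) (hsymm : ∀ i j, σ i j = σ j i) :
    maxEig (gainAdj G (fun i j => (σ i j : ℂ))) = maxEig (G.adjMatrix ℂ) ↔
      GBalanced G (fun i j => (σ i j : ℂ)) := by
  by_cases hV : IsEmpty V
  · have hmat : gainAdj G (fun i j => ((σ i j : ℝ) : ℂ)) = G.adjMatrix ℂ :=
      Subsingleton.elim _ _
    constructor
    · intro _ u c _
      exact (hV.false u).elim
    · intro _
      rw [hmat]
  · haveI : Nonempty V := not_isEmpty_iff.mp hV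
    constructor
    · exact maxEig_eq_imp_balanced G hconn σ hsgn hsymm
    · exact balanced_imp_maxEig_eq G hconn σ hsgn hsymm

end GG
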